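/- Let 0 < a < 1 and let k_R, k_Ω > 0 satisfy 0 < μ < 4(1−a)k_R k_Ω / (4(1−a)k_R + k_Ω²). Then μ < √k_R, and the 2×2 symmetric matrix W₃ = [[(1−a)μ k_R/2, −μ k_Ω/(2√2)],[−μ k_Ω/(2√2), k_Ω − μ]] is positive definite. -/

import Mathlib

open Matrix Real

noncomputable def hat (v : Fin 3 → ℝ) : Matrix (Fin 3) (Fin 3) ℝ :=
  !![0, -v 2, v 1; v 2, 0, -v 0; -v 1, v 0, 0]

noncomputable def vee (A : Matrix (Fin 3) (Fin 3) ℝ) : Fin 3 → ℝ := ![A 2 1, A 0 2, A 1 0]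

/-- Frobenius norm of a 3×3 real matrix: ‖A‖ = √(tr(Aᵀ A)). -/
noncomputable def fnorm (A : Matrix (Fin 3) (Fin 3) ℝ) : ℝ := Real.sqrt ((Aᵀ * A).trace)

/-- Euclidean norm on ℝ³. -/
noncomputable def enorm (v : Fin 3 → ℝ) : ℝ := Real.sqrt (v ⬝ᵥ v)

/-- The special orthogonal group SO(3). -/
def SO3 (R : Matrix (Fin 3) (Fin 3) ℝ) : Prop := Rᵀ * R = 1 ∧ R.det = 1

lemma quad_pos (A B C x0 x1 : ℝ) (hA : 0 < A) (hdet : 0 < A * C - B ^ 2)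
    (hx : x0 ≠ 0 ∨ x1 ≠ 0) :
    0 < x0 * (A * x0 + B * x1) + x1 * (B * x0 + C * x1) := by
  rcases eq_or_ne x1 0 with h1 | h1
  · have h0 : x0 ≠ 0 := by rcases hx with h | h; exact h; exact absurd h1 h
    subst h1
    nlinarith [mul_pos hA (mul_self_pos.mpr h0)]
  · have key : 0 < (A * x0 + B * x1) ^ 2 + (A * C - B ^ 2) * x1 ^ 2 := by
      positivity
    nlinarith [key, hA]

theorem W3_posdef (a kR kΩ μ : ℝ) (ha : 0 < a) (ha1 : a < 1)
    (hkR : 0 < kR) (hkΩ : 0 < kΩ) (hμ : 0 < μ)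
    (hμ' : μ < 4 * (1 - a) * kR * kΩ / (4 * (1 - a) * kR + kΩ ^ 2)) :
    μ < Real.sqrt kR ∧
    (!![(1 - a) * μ * kR / 2, -μ * kΩ / (2 * Real.sqrt 2);
        -μ * kΩ / (2 * Real.sqrt 2), kΩ - μ] :
      Matrix (Fin 2) (Fin 2) ℝ).PosDef := by
  have h1a : 0 < 1 - a := by linarith
  have hden : 0 < 4 * (1 - a) * kR + kΩ ^ 2 := by positivity
  have hkey : μ * (4 * (1 - a) * kR + kΩ ^ 2) < 4 * (1 - a) * kR * kΩ :=
    (lt_div_iff₀ hden).mp hμ'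
  have hμkΩ : μ < kΩ := by nlinarith
  constructor
  · have ht2 : Real.sqrt ((1 - a) * kR) ^ 2 = (1 - a) * kR :=
      Real.sq_sqrt (by positivity)
    have htp : 0 < Real.sqrt ((1 - a) * kR) := Real.sqrt_pos.mpr (by positivity)
    have hts : Real.sqrt ((1 - a) * kR) < Real.sqrt kR :=
      Real.sqrt_lt_sqrt (by positivity) (by nlinarith)
    have hμt : μ < Real.sqrt ((1 - a) * kR) := by
      nlinarith [sq_nonneg (2 * Real.sqrt ((1 - a) * kR) - kΩ),
        mul_pos (mul_pos hμ htp) hkΩ]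
    linarith
  · have hs2 : Real.sqrt 2 ^ 2 = 2 := Real.sq_sqrt (by norm_num)
    have hs2p : (0:ℝ) < Real.sqrt 2 := Real.sqrt_pos.mpr (by norm_num)
    have hB2 : (-μ * kΩ / (2 * Real.sqrt 2)) ^ 2 = μ ^ 2 * kΩ ^ 2 / 8 := by
      rw [div_pow]; rw [show ((2:ℝ) * Real.sqrt 2) ^ 2 = 8 by rw [mul_pow, hs2]; norm_num]; ring
    refine Matrix.PosDef.of_dotProduct_mulVec_pos ?_ ?_
    · ext i j
      fin_cases i <;> fin_cases j <;>
        simp [Matrix.conjTranspose_apply]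
    · intro x hx
      have hx' : x 0 ≠ 0 ∨ x 1 ≠ 0 := by
        by_contra h
        push_neg at h
        exact hx (funext fun i => by fin_cases i <;> simp [h.1, h.2])
      have := quad_pos ((1 - a) * μ * kR / 2) (-μ * kΩ / (2 * Real.sqrt 2)) (kΩ - μ)
        (x 0) (x 1) (by positivity) (by rw [hB2]; nlinarith) hx'
      simpa [Matrix.mulVec, dotProduct, Fin.sum_univ_two] using this
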